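/- The trace-AMSE risk R(W) = tr(Ω⁻¹[(I-W)V₁(I-W)ᵀ + WV₂Wᵀ + (I-W)CWᵀ + WCᵀ(I-W)ᵀ + WΛWᵀ]) is strictly convex in W whenever the block matrix Σ = [[V₁, C],[Cᵀ, V₂]] is symmetric positive definite, Ω is symmetric positive definite, and Λ is symmetric positive semidefinite. -/

import Mathlib

open Matrix

private lemma trace_pos_aux {K : ℕ} (A N D : Matrix (Fin K) (Fin K) ℝ)
    (hA : A.PosDef) (hN : N.PosDef) (hD : D ≠ 0) :
    0 < Matrix.trace (A * (D * N * Dᵀ)) := by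
  obtain ⟨S, hSps, hSsq⟩ : ∃ S : Matrix (Fin K) (Fin K) ℝ, S.PosSemidef ∧ S * S = A :=
    by
      open scoped MatrixOrder in
      exact ⟨CFC.sqrt A, (CFC.sqrt_nonneg A).posSemidef, CFC.sqrt_mul_sqrt_self A hA.posSemidef.nonneg⟩
  have hSsymm : Sᵀ = S := by
    have := hSps.isHermitian
    rwa [Matrix.IsHermitian, Matrix.conjTranspose_eq_transpose_of_trivial] at this
  have hSunit : IsUnit S := by
    have hAu : IsUnit A.det := hA.det_pos.ne'.isUnit
    rw [← hSsq, Matrix.det_mul] at hAu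
    exact (Matrix.isUnit_iff_isUnit_det S).mpr (isUnit_of_mul_isUnit_left hAu)
  set E := S * D with hE
  have hEne : E ≠ 0 := by
    intro h
    apply hD
    haveI := hSunit.invertible
    have h2 : S⁻¹ * E = S⁻¹ * 0 := by rw [h]
    rwa [hE, Matrix.inv_mul_cancel_left_of_invertible, Matrix.mul_zero] at h2
  have htr : Matrix.trace (A * (D * N * Dᵀ)) = Matrix.trace (E * N * Eᵀ) := by
    rw [← hSsq, hE, Matrix.transpose_mul, hSsymm]
    have h1 : S * S * (D * N * Dᵀ) = S * (S * D * N * Dᵀ) := by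
      simp only [Matrix.mul_assoc]
    rw [h1, Matrix.trace_mul_comm]
    simp only [Matrix.mul_assoc]
  rw [htr]
  have hdiag : ∀ i, (E * N * Eᵀ) i i = (E i) ⬝ᵥ N *ᵥ (E i) := by
    intro i
    simp only [Matrix.mul_apply, Matrix.transpose_apply, dotProduct, Matrix.mulVec,
      Finset.sum_mul, Finset.mul_sum]
    rw [Finset.sum_comm]
    apply Finset.sum_congr rfl; intro k _
    apply Finset.sum_congr rfl; intro j _
    ring
  rw [Matrix.trace]
  have hrow : ∃ i, E i ≠ 0 := by
    by_contra h
    push_neg at h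
    exact hEne (by funext i j; exact congrFun (h i) j)
  obtain ⟨i0, hi0⟩ := hrow
  apply Finset.sum_pos'
  · intro i _
    simp only [Matrix.diag_apply, hdiag]
    have := hN.posSemidef.re_dotProduct_nonneg (E i)
    simpa using this
  · exact ⟨i0, Finset.mem_univ _, by
      simp only [Matrix.diag_apply, hdiag]
      have := hN.dotProduct_mulVec_pos hi0
      simpa using this⟩

private lemma N_posdef_aux {K : ℕ} (V₁ V₂ C Λ : Matrix (Fin K) (Fin K) ℝ)
    (hSigma : (Matrix.fromBlocks V₁ C Cᵀ V₂).PosDef) (hΛ : Λ.PosSemidef) :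
    (V₁ + V₂ - C - Cᵀ + Λ).PosDef := by
  have hherm : (V₁ + V₂ - C - Cᵀ).IsHermitian := by
    have h := hSigma.isHermitian
    rw [Matrix.IsHermitian, Matrix.conjTranspose_eq_transpose_of_trivial,
      Matrix.fromBlocks_transpose] at h
    have h1 : V₁ᵀ = V₁ := by
      have := congrArg (fun M => Matrix.toBlocks₁₁ M) h
      simpa using this
    have h2 : V₂ᵀ = V₂ := by
      have := congrArg (fun M => Matrix.toBlocks₂₂ M) h
      simpa using this
    rw [Matrix.IsHermitian, Matrix.conjTranspose_eq_transpose_of_trivial]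
    simp only [Matrix.transpose_add, Matrix.transpose_sub, h1, h2, Matrix.transpose_transpose]
    abel
  have hpd : (V₁ + V₂ - C - Cᵀ).PosDef := by
    refine Matrix.PosDef.of_dotProduct_mulVec_pos hherm fun x hx => ?_
    have hy : (Sum.elim x (-x) : Fin K ⊕ Fin K → ℝ) ≠ 0 := by
      intro h
      apply hx
      funext i
      have := congrFun h (Sum.inl i)
      simpa using this
    have := hSigma.dotProduct_mulVec_pos hy
    rw [Matrix.fromBlocks_mulVec] at this
    simp only [star_trivial, sumElim_dotProduct_sumElim] at this ⊢
    simp only [Matrix.mulVec_neg, dotProduct_add, dotProduct_neg,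
      neg_dotProduct, Matrix.sub_mulVec, Matrix.add_mulVec, Sum.elim_comp_inl,
      Sum.elim_comp_inr, dotProduct_sub] at this ⊢
    linarith [this]
  exact hpd.add_posSemidef hΛ

private lemma key_identity {K : ℕ} (V₁ V₂ C Λ X Y : Matrix (Fin K) (Fin K) ℝ) (a : ℝ) :
    (fun W : Matrix (Fin K) (Fin K) ℝ =>
      (1 - W) * V₁ * (1 - W)ᵀ + W * V₂ * Wᵀ + (1 - W) * C * Wᵀ + W * Cᵀ * (1 - W)ᵀ + W * Λ * Wᵀ)
      (a • X + (1-a) • Y)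
    = a • ((fun W : Matrix (Fin K) (Fin K) ℝ =>
      (1 - W) * V₁ * (1 - W)ᵀ + W * V₂ * Wᵀ + (1 - W) * C * Wᵀ + W * Cᵀ * (1 - W)ᵀ + W * Λ * Wᵀ) X)
    + (1-a) • ((fun W : Matrix (Fin K) (Fin K) ℝ =>
      (1 - W) * V₁ * (1 - W)ᵀ + W * V₂ * Wᵀ + (1 - W) * C * Wᵀ + W * Cᵀ * (1 - W)ᵀ + W * Λ * Wᵀ) Y)
    - (a * (1-a)) • ((X - Y) * (V₁ + V₂ - C - Cᵀ + Λ) * (X - Y)ᵀ) := by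
  simp only [Matrix.transpose_add, Matrix.transpose_sub, Matrix.transpose_smul,
    Matrix.transpose_one, Matrix.sub_mul, Matrix.mul_sub, Matrix.add_mul, Matrix.mul_add,
    Matrix.smul_mul, Matrix.mul_smul, Matrix.one_mul, Matrix.mul_one, smul_smul, smul_sub, smul_add,
    Matrix.mul_assoc]
  module

theorem stmt_12 {K : ℕ} (V₁ V₂ C Λ Ω : Matrix (Fin K) (Fin K) ℝ)
    (hSigma : (Matrix.fromBlocks V₁ C Cᵀ V₂).PosDef)
    (hΩ : Ω.PosDef) (hΛ : Λ.PosSemidef) :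
    StrictConvexOn ℝ Set.univ (fun W : Matrix (Fin K) (Fin K) ℝ =>
      Matrix.trace (Ω⁻¹ * ((1 - W) * V₁ * (1 - W)ᵀ + W * V₂ * Wᵀ
        + (1 - W) * C * Wᵀ + W * Cᵀ * (1 - W)ᵀ + W * Λ * Wᵀ))) := by
  refine ⟨convex_univ, fun X _ Y _ hXY a b ha hb hab => ?_⟩
  have hb' : b = 1 - a := by linarith
  subst hb'
  have hN := N_posdef_aux V₁ V₂ C Λ hSigma hΛ
  have hD : X - Y ≠ 0 := sub_ne_zero_of_ne hXY
  have hpos := trace_pos_aux Ω⁻¹ (V₁ + V₂ - C - Cᵀ + Λ) (X - Y) hΩ.inv hN hD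
  have hkey := key_identity V₁ V₂ C Λ X Y a
  simp only [] at hkey
  simp only [smul_eq_mul]
  rw [hkey]
  rw [Matrix.mul_sub, Matrix.mul_add, Matrix.mul_smul, Matrix.mul_smul, Matrix.mul_smul,
    Matrix.trace_sub, Matrix.trace_add, Matrix.trace_smul, Matrix.trace_smul, Matrix.trace_smul]
  simp only [smul_eq_mul]
  have hab' : 0 < a * (1 - a) := mul_pos ha hb
  nlinarith [mul_pos hab' hpos]
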